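/- Let n ≥ 2 and let 𝒩 be a nested set on the path graph P with vertex set {1,…,n−1}. Then for every monotonic ordering J₁, J₂, …, J_r of the members of 𝒩 (meaning each member appears after every member strictly containing it), the product w₀(J₁)·w₀(J₂)⋯w₀(J_r) ∈ S_n is a separable permutation, i.e., it avoids the patterns 3142 and 2413. -/

import Mathlib

namespace SepPaper

/-- Number of inversions of a permutation of `Fin n`, i.e. its Coxeter length. -/
def invLen {n : ℕ} (w : Equiv.Perm (Fin n)) : ℕ :=
  (Finset.univ.filter fun p : Fin n × Fin n => p.1 < p.2 ∧ w p.2 < w p.1).card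

/-- Right weak order. -/
def leR {n : ℕ} (v u : Equiv.Perm (Fin n)) : Prop :=
  invLen v + invLen (v⁻¹ * u) = invLen u

/-- Left weak order. -/
def leL {n : ℕ} (v u : Equiv.Perm (Fin n)) : Prop :=
  invLen v + invLen (u * v⁻¹) = invLen u

instance {n : ℕ} (v u : Equiv.Perm (Fin n)) : Decidable (leR v u) :=
  inferInstanceAs (Decidable (_ = _))

instance {n : ℕ} (v u : Equiv.Perm (Fin n)) : Decidable (leL v u) :=
  inferInstanceAs (Decidable (_ = _))

/-- The permutation 3142 (one-indexed) as a permutation of `Fin 4`. -/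
def perm3142 : Equiv.Perm (Fin 4) :=
  ⟨![2, 0, 3, 1], ![1, 3, 0, 2], by decide, by decide⟩

/-- The permutation 2413 (one-indexed) as a permutation of `Fin 4`. -/
def perm2413 : Equiv.Perm (Fin 4) :=
  ⟨![1, 3, 0, 2], ![2, 0, 3, 1], by decide, by decide⟩

/-- `w` contains the pattern `σ`. -/
def ContainsPattern {n k : ℕ} (w : Equiv.Perm (Fin n)) (σ : Equiv.Perm (Fin k)) : Prop :=
  ∃ f : Fin k → Fin n, StrictMono f ∧ ∀ a b : Fin k, σ a < σ b ↔ w (f a) < w (f b)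

/-- A permutation is separable if it avoids 3142 and 2413. -/
def Separable {n : ℕ} (w : Equiv.Perm (Fin n)) : Prop :=
  ¬ ContainsPattern w perm3142 ∧ ¬ ContainsPattern w perm2413

/-- The longest element `w₀` of `S_n`, `i ↦ n+1-i` (one-indexed). -/
def w0 (n : ℕ) : Equiv.Perm (Fin n) :=
  ⟨Fin.rev, Fin.rev, Fin.rev_rev, Fin.rev_rev⟩


/-- The underlying function of the block reversal `w₀(J)`: in one-indexed terms,
for the block of positions `a, a+1, …, b+1` it sends `i ↦ a + b + 1 - i`, and is
the identity elsewhere (here `p` is a zero-indexed position, i.e. `i = p + 1`). -/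
def revBlockFun (n a b : ℕ) (p : Fin n) : Fin n :=
  if h : 1 ≤ a ∧ a - 1 ≤ (p : ℕ) ∧ (p : ℕ) ≤ b ∧ b < n
  then ⟨a + b - 1 - (p : ℕ), by omega⟩ else p

lemma revBlockFun_involutive (n a b : ℕ) : Function.Involutive (revBlockFun n a b) := by
  intro p
  unfold revBlockFun
  by_cases h : 1 ≤ a ∧ a - 1 ≤ (p : ℕ) ∧ (p : ℕ) ≤ b ∧ b < n
  · rw [dif_pos h]
    have h2 : 1 ≤ a ∧ a - 1 ≤ ((⟨a + b - 1 - (p : ℕ), by omega⟩ : Fin n) : ℕ) ∧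
        ((⟨a + b - 1 - (p : ℕ), by omega⟩ : Fin n) : ℕ) ≤ b ∧ b < n := by
      simp only [Fin.val_mk]; omega
    rw [dif_pos h2]
    apply Fin.ext
    simp only [Fin.val_mk]
    omega
  · rw [dif_neg h, dif_neg h]

/-- The permutation `w₀(J) ∈ S_n` for an interval `J = {a, …, b} ⊆ {1, …, n-1}`:
it reverses the block of (one-indexed) positions `a, …, b+1` via
`i ↦ a + b + 1 - i`, and fixes everything else. -/
noncomputable def w0J (n : ℕ) (J : Finset ℕ) : Equiv.Perm (Fin n) :=
  Function.Involutive.toPerm _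
    (revBlockFun_involutive n (sInf (↑J : Set ℕ)) (sSup (↑J : Set ℕ)))

/-- `S` is an "interval" of integers: closed under betweenness.  For nonempty sets
this is exactly connectivity of the induced subgraph of the path graph. -/
def IsIntervalSet (S : Set ℕ) : Prop :=
  ∀ i ∈ S, ∀ j ∈ S, ∀ m : ℕ, i ≤ m → m ≤ j → m ∈ S

/-- A nested set on the path graph with vertex set `{1, …, n-1}`:
(N1) each member is a nonempty interval of consecutive integers in `{1, …, n-1}`
(i.e. induces a connected subgraph of the path);
(N2) any two members are nested or disjoint;
(N3) the union of `k ≥ 2` pairwise disjoint members is not an interval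
(i.e. induces a disconnected subgraph of the path). -/
def IsNestedSetPath (n : ℕ) (𝒩 : Finset (Finset ℕ)) : Prop :=
  (∀ J ∈ 𝒩, J.Nonempty ∧ (∀ i ∈ J, 1 ≤ i ∧ i ≤ n - 1) ∧ IsIntervalSet (↑J : Set ℕ)) ∧
  (∀ I ∈ 𝒩, ∀ J ∈ 𝒩, I ⊆ J ∨ J ⊆ I ∨ I ∩ J = ∅) ∧
  (∀ S : Finset (Finset ℕ), S ⊆ 𝒩 → 2 ≤ S.card →
    (↑S : Set (Finset ℕ)).Pairwise (fun I J => I ∩ J = ∅) →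
    ¬ IsIntervalSet (⋃ J ∈ (↑S : Set (Finset ℕ)), (↑J : Set ℕ)))

/-- `L` is a monotonic ordering of the members of `𝒩`: it lists each member exactly
once, and each member appears after every member strictly containing it. -/
def MonotonicOrdering (𝒩 : Finset (Finset ℕ)) (L : List (Finset ℕ)) : Prop :=
  L.Nodup ∧ L.toFinset = 𝒩 ∧
  ∀ i j : Fin L.length, L.get i ⊂ L.get j → (j : ℕ) < (i : ℕ)


section Aux

variable {n : ℕ}

def IsIntervalF {n : ℕ} (S : Set (Fin n)) : Prop :=
  ∀ p ∈ S, ∀ q ∈ S, ∀ r : Fin n, p ≤ r → r ≤ q → r ∈ S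

def Blk (n : ℕ) (K : Finset ℕ) : Set (Fin n) :=
  {p | sInf (↑K : Set ℕ) - 1 ≤ (p : ℕ) ∧ (p : ℕ) ≤ sSup (↑K : Set ℕ)}

def ValidK (n : ℕ) (K : Finset ℕ) : Prop :=
  1 ≤ sInf (↑K : Set ℕ) ∧ sInf (↑K : Set ℕ) ≤ sSup (↑K : Set ℕ) ∧ sSup (↑K : Set ℕ) < n

lemma mem_Blk {K : Finset ℕ} {p : Fin n} :
    p ∈ Blk n K ↔ sInf (↑K : Set ℕ) - 1 ≤ (p : ℕ) ∧ (p : ℕ) ≤ sSup (↑K : Set ℕ) := Iff.rfl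

lemma Blk_interval (K : Finset ℕ) : IsIntervalF (Blk n K) := by
  intro p hp q hq r hpr hrq
  rw [mem_Blk] at *
  rw [Fin.le_def] at hpr hrq
  omega

lemma w0J_apply (K : Finset ℕ) (p : Fin n) :
    w0J n K p = revBlockFun n (sInf (↑K : Set ℕ)) (sSup (↑K : Set ℕ)) p := rfl

lemma w0J_val_of_mem {K : Finset ℕ} (hK : ValidK n K) {p : Fin n} (hp : p ∈ Blk n K) :
    ((w0J n K p : Fin n) : ℕ) = sInf (↑K : Set ℕ) + sSup (↑K : Set ℕ) - 1 - (p : ℕ) := by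
  rw [w0J_apply]
  unfold revBlockFun
  rw [dif_pos ⟨hK.1, hp.1, hp.2, hK.2.2⟩]

lemma w0J_of_not_mem {K : Finset ℕ} {p : Fin n} (hp : p ∉ Blk n K) : w0J n K p = p := by
  rw [w0J_apply]
  unfold revBlockFun
  rw [dif_neg]
  intro h
  exact hp ⟨h.2.1, h.2.2.1⟩

lemma w0J_mem_Blk {K : Finset ℕ} (hK : ValidK n K) {p : Fin n} (hp : p ∈ Blk n K) :
    w0J n K p ∈ Blk n K := by
  rw [mem_Blk, w0J_val_of_mem hK hp]
  rcases hK with ⟨h1, h2, h3⟩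
  rcases hp with ⟨h4, h5⟩
  omega

lemma w0J_mem_iff {K : Finset ℕ} (hK : ValidK n K) {p : Fin n} :
    p ∈ Blk n K ↔ w0J n K p ∈ Blk n K := by
  constructor
  · exact w0J_mem_Blk hK
  · intro h
    by_contra hp
    rw [w0J_of_not_mem hp] at h
    exact hp h

lemma w0J_anti {K : Finset ℕ} (hK : ValidK n K) {p q : Fin n}
    (hp : p ∈ Blk n K) (hq : q ∈ Blk n K) (hlt : p < q) : w0J n K q < w0J n K p := by
  rw [Fin.lt_def, w0J_val_of_mem hK hp, w0J_val_of_mem hK hq]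
  rw [Fin.lt_def] at hlt
  rcases hK with ⟨h1, h2, h3⟩
  rcases hp with ⟨h4, h5⟩
  rcases hq with ⟨h6, h7⟩
  omega

lemma w0J_invol (K : Finset ℕ) (p : Fin n) : w0J n K (w0J n K p) = p :=
  revBlockFun_involutive n _ _ p

end Aux

section Aux2

variable {n : ℕ}

lemma img_of_superset {K : Finset ℕ} (hK : ValidK n K) {I : Set (Fin n)}
    (h : Blk n K ⊆ I) : w0J n K '' I = I := by
  apply Set.Subset.antisymm
  · rintro _ ⟨p, hp, rfl⟩
    by_cases hb : p ∈ Blk n K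
    · exact h (w0J_mem_Blk hK hb)
    · rw [w0J_of_not_mem hb]; exact hp
  · intro p hp
    refine ⟨w0J n K p, ?_, w0J_invol K p⟩
    by_cases hb : p ∈ Blk n K
    · exact h (w0J_mem_Blk hK hb)
    · rw [w0J_of_not_mem hb]; exact hp

lemma img_of_disj {K : Finset ℕ} {I : Set (Fin n)}
    (h : I ∩ Blk n K = ∅) : w0J n K '' I = I := by
  have hfix : ∀ p ∈ I, w0J n K p = p := by
    intro p hp
    apply w0J_of_not_mem
    intro hb
    have hmem : p ∈ I ∩ Blk n K := ⟨hp, hb⟩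
    rw [h] at hmem
    exact hmem
  apply Set.Subset.antisymm
  · rintro _ ⟨p, hp, rfl⟩; rw [hfix p hp]; exact hp
  · intro p hp; exact ⟨p, hp, hfix p hp⟩

lemma img_of_subset {K : Finset ℕ} (hK : ValidK n K) {I : Set (Fin n)}
    (h : I ⊆ Blk n K) : w0J n K '' I ⊆ Blk n K := by
  rintro _ ⟨p, hp, rfl⟩
  exact w0J_mem_Blk hK (h hp)

lemma img_interval_of_subset {K : Finset ℕ} (hK : ValidK n K) {I : Set (Fin n)}
    (h : I ⊆ Blk n K) (hI : IsIntervalF I) : IsIntervalF (w0J n K '' I) := by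
  rintro _ ⟨p, hp, rfl⟩ _ ⟨q, hq, rfl⟩ r h1 h2
  have hpB := h hp
  have hqB := h hq
  have hrB : r ∈ Blk n K := Blk_interval K _ (w0J_mem_Blk hK hpB) _ (w0J_mem_Blk hK hqB) r h1 h2
  have her : w0J n K r ∈ I := by
    apply hI q hq p hp
    · rw [Fin.le_def, w0J_val_of_mem hK hrB]
      rw [Fin.le_def, w0J_val_of_mem hK hqB] at h2
      rcases hK with ⟨k1, k2, k3⟩; rcases hqB with ⟨q1, q2⟩; rcases hrB with ⟨r1, r2⟩
      omega
    · rw [Fin.le_def, w0J_val_of_mem hK hrB]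
      rw [Fin.le_def, w0J_val_of_mem hK hpB] at h1
      rcases hK with ⟨k1, k2, k3⟩; rcases hpB with ⟨p1, p2⟩; rcases hrB with ⟨r1, r2⟩
      omega
  exact ⟨w0J n K r, her, w0J_invol K r⟩

/-- Lemma B: the image of a compatible interval under the product is an interval,
and stays compatible with every block "above" the list. -/
lemma prod_image_interval :
    ∀ (L : List (Finset ℕ)), (∀ K ∈ L, ValidK n K) →
    L.Pairwise (fun K K' => Blk n K' ⊆ Blk n K ∨ Blk n K' ∩ Blk n K = ∅) →
    ∀ B : Set (Fin n), IsIntervalF B →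
    (∀ K ∈ L, Blk n K ⊆ B ∨ B ⊆ Blk n K ∨ B ∩ Blk n K = ∅) →
    IsIntervalF (⇑(L.map (w0J n)).prod '' B) ∧
    (∀ K₀ : Finset ℕ,
      (∀ K ∈ L, Blk n K ⊆ Blk n K₀ ∨ Blk n K ∩ Blk n K₀ = ∅) →
      (Blk n K₀ ⊆ B ∨ B ⊆ Blk n K₀ ∨ B ∩ Blk n K₀ = ∅) →
      (Blk n K₀ ⊆ ⇑(L.map (w0J n)).prod '' B ∨ ⇑(L.map (w0J n)).prod '' B ⊆ Blk n K₀ ∨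
        ⇑(L.map (w0J n)).prod '' B ∩ Blk n K₀ = ∅)) := by
  intro L
  induction L with
  | nil =>
    intro _ _ B hB hcompat
    simp only [List.map_nil, List.prod_nil, Equiv.Perm.coe_one, Set.image_id]
    exact ⟨hB, fun K₀ _ h2 => h2⟩
  | cons K L ih =>
    intro hval hord B hB hcompat
    have hvalK : ValidK n K := hval K List.mem_cons_self
    rw [List.pairwise_cons] at hord
    obtain ⟨ihI, ihC⟩ := ih (fun K' hK' => hval K' (List.mem_cons_of_mem K hK'))
      hord.2 B hB (fun K' hK' => hcompat K' (List.mem_cons_of_mem K hK'))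
    set I : Set (Fin n) := ⇑(L.map (w0J n)).prod '' B with hIdef
    have hcompI : Blk n K ⊆ I ∨ I ⊆ Blk n K ∨ I ∩ Blk n K = ∅ :=
      ihC K (fun K' hK' => hord.1 K' hK') (hcompat K List.mem_cons_self)
    have himg : ⇑((K :: L).map (w0J n)).prod '' B = w0J n K '' I := by
      rw [List.map_cons, List.prod_cons, Equiv.Perm.coe_mul, Set.image_comp]
    rw [himg]
    constructor
    · rcases hcompI with h | h | h
      · rw [img_of_superset hvalK h]; exact ihI
      · exact img_interval_of_subset hvalK h ihI
      · rw [img_of_disj h]; exact ihI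
    · intro K₀ hK₀ hBK₀
      have hIK₀ : Blk n K₀ ⊆ I ∨ I ⊆ Blk n K₀ ∨ I ∩ Blk n K₀ = ∅ :=
        ihC K₀ (fun K' hK' => hK₀ K' (List.mem_cons_of_mem K hK')) hBK₀
      rcases hcompI with h | h | h
      · rw [img_of_superset hvalK h]; exact hIK₀
      · -- I ⊆ Blk K, image ⊆ Blk K
        have hsub : w0J n K '' I ⊆ Blk n K := img_of_subset hvalK h
        rcases hK₀ K List.mem_cons_self with hc | hc
        · exact Or.inr (Or.inl (hsub.trans hc))
        · refine Or.inr (Or.inr ?_)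
          rw [Set.eq_empty_iff_forall_notMem]
          rintro p ⟨hp1, hp2⟩
          have hmem : p ∈ Blk n K ∩ Blk n K₀ := ⟨hsub hp1, hp2⟩
          rw [hc] at hmem
          exact hmem
      · rw [img_of_disj h]; exact hIK₀

end Aux2

section Aux3

def reflFun (lo hi : Fin 4) (a : Fin 4) : Fin 4 :=
  if h : (lo : ℕ) ≤ (a : ℕ) ∧ (a : ℕ) ≤ (hi : ℕ) then
    ⟨(lo : ℕ) + (hi : ℕ) - (a : ℕ), by have := hi.isLt; omega⟩ else a

lemma reflFun_involutive (lo hi : Fin 4) : Function.Involutive (reflFun lo hi) := by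
  intro a
  unfold reflFun
  by_cases h : (lo : ℕ) ≤ (a : ℕ) ∧ (a : ℕ) ≤ (hi : ℕ)
  · rw [dif_pos h]
    have h2 : (lo : ℕ) ≤ ((⟨(lo : ℕ) + (hi : ℕ) - (a : ℕ), by have := hi.isLt; omega⟩ : Fin 4) : ℕ) ∧
        ((⟨(lo : ℕ) + (hi : ℕ) - (a : ℕ), by have := hi.isLt; omega⟩ : Fin 4) : ℕ) ≤ (hi : ℕ) := by
      simp only [Fin.val_mk]; omega
    rw [dif_pos h2]
    apply Fin.ext
    simp only [Fin.val_mk]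
    omega
  · rw [dif_neg h, dif_neg h]

lemma key3142 : ∀ lo hi : Fin 4,
    (∀ c d x : Fin 4, (lo : ℕ) ≤ (c : ℕ) → (c : ℕ) ≤ (hi : ℕ) → (lo : ℕ) ≤ (d : ℕ) →
      (d : ℕ) ≤ (hi : ℕ) → ¬((lo : ℕ) ≤ (x : ℕ) ∧ (x : ℕ) ≤ (hi : ℕ)) →
      ¬((![2,0,3,1] : Fin 4 → Fin 4) (reflFun lo hi c) < (![2,0,3,1] : Fin 4 → Fin 4) (reflFun lo hi x) ∧
        (![2,0,3,1] : Fin 4 → Fin 4) (reflFun lo hi x) < (![2,0,3,1] : Fin 4 → Fin 4) (reflFun lo hi d))) →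
    ((∀ a, (![2,0,3,1] : Fin 4 → Fin 4) (reflFun lo hi a) = (![2,0,3,1] : Fin 4 → Fin 4) a) ∨
     (∀ a, (![2,0,3,1] : Fin 4 → Fin 4) (reflFun lo hi a) = (![1,3,0,2] : Fin 4 → Fin 4) a)) := by
  decide

lemma key2413 : ∀ lo hi : Fin 4,
    (∀ c d x : Fin 4, (lo : ℕ) ≤ (c : ℕ) → (c : ℕ) ≤ (hi : ℕ) → (lo : ℕ) ≤ (d : ℕ) →
      (d : ℕ) ≤ (hi : ℕ) → ¬((lo : ℕ) ≤ (x : ℕ) ∧ (x : ℕ) ≤ (hi : ℕ)) →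
      ¬((![1,3,0,2] : Fin 4 → Fin 4) (reflFun lo hi c) < (![1,3,0,2] : Fin 4 → Fin 4) (reflFun lo hi x) ∧
        (![1,3,0,2] : Fin 4 → Fin 4) (reflFun lo hi x) < (![1,3,0,2] : Fin 4 → Fin 4) (reflFun lo hi d))) →
    ((∀ a, (![1,3,0,2] : Fin 4 → Fin 4) (reflFun lo hi a) = (![2,0,3,1] : Fin 4 → Fin 4) a) ∨
     (∀ a, (![1,3,0,2] : Fin 4 → Fin 4) (reflFun lo hi a) = (![1,3,0,2] : Fin 4 → Fin 4) a)) := by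
  decide

end Aux3

section Aux4

variable {n : ℕ}

lemma no_pattern_core (v : Equiv.Perm (Fin n)) (K : Finset ℕ) (hK : ValidK n K)
    (hvB : IsIntervalF (⇑v '' Blk n K)) (hv : Separable v) (σ : Equiv.Perm (Fin 4))
    (hkey : ∀ lo hi : Fin 4,
      (∀ c d x : Fin 4, (lo : ℕ) ≤ (c : ℕ) → (c : ℕ) ≤ (hi : ℕ) → (lo : ℕ) ≤ (d : ℕ) →
        (d : ℕ) ≤ (hi : ℕ) → ¬((lo : ℕ) ≤ (x : ℕ) ∧ (x : ℕ) ≤ (hi : ℕ)) →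
        ¬(σ (reflFun lo hi c) < σ (reflFun lo hi x) ∧ σ (reflFun lo hi x) < σ (reflFun lo hi d))) →
      ((∀ a, σ (reflFun lo hi a) = perm3142 a) ∨ (∀ a, σ (reflFun lo hi a) = perm2413 a))) :
    ¬ ContainsPattern (v * w0J n K) σ := by
  classical
  rintro ⟨f, hf, hpat⟩
  set B := Blk n K with hBdef
  set e := w0J n K with hedef
  set T : Finset (Fin 4) := Finset.univ.filter (fun x => f x ∈ B) with hT
  have hTmem : ∀ x, x ∈ T ↔ f x ∈ B := by
    intro x; rw [hT]; simp
  obtain ⟨lo, hi, hmem⟩ : ∃ lo hi : Fin 4,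
      ∀ x : Fin 4, f x ∈ B ↔ ((lo : ℕ) ≤ (x : ℕ) ∧ (x : ℕ) ≤ (hi : ℕ)) := by
    by_cases hne : T.Nonempty
    · refine ⟨T.min' hne, T.max' hne, fun x => ⟨fun hx => ?_, fun hx => ?_⟩⟩
      · have hxT : x ∈ T := (hTmem x).mpr hx
        exact ⟨Fin.le_def.mp (T.min'_le x hxT), Fin.le_def.mp (T.le_max' x hxT)⟩
      · have hlo : f (T.min' hne) ∈ B := (hTmem _).mp (T.min'_mem hne)
        have hhi : f (T.max' hne) ∈ B := (hTmem _).mp (T.max'_mem hne)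
        exact Blk_interval K _ hlo _ hhi (f x)
          (hf.le_iff_le.mpr (Fin.le_def.mpr hx.1)) (hf.le_iff_le.mpr (Fin.le_def.mpr hx.2))
    · refine ⟨1, 0, fun x => ⟨fun hx => absurd ⟨x, (hTmem x).mpr hx⟩ hne, fun hx => ?_⟩⟩
      have h1 : ((1 : Fin 4) : ℕ) = 1 := rfl
      have h0 : ((0 : Fin 4) : ℕ) = 0 := rfl
      omega
  set ρf := reflFun lo hi with hρdef
  have hρval : ∀ x : Fin 4, ((lo : ℕ) ≤ (x : ℕ) ∧ (x : ℕ) ≤ (hi : ℕ)) →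
      (ρf x : ℕ) = (lo : ℕ) + (hi : ℕ) - (x : ℕ) := by
    intro x hx
    rw [hρdef]
    unfold reflFun
    rw [dif_pos hx]
  have hρrange : ∀ x : Fin 4, ((lo : ℕ) ≤ (x : ℕ) ∧ (x : ℕ) ≤ (hi : ℕ)) →
      ((lo : ℕ) ≤ (ρf x : ℕ) ∧ (ρf x : ℕ) ≤ (hi : ℕ)) := by
    intro x hx
    rw [hρval x hx]
    omega
  have hρid : ∀ x : Fin 4, ¬((lo : ℕ) ≤ (x : ℕ) ∧ (x : ℕ) ≤ (hi : ℕ)) → ρf x = x := by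
    intro x hx
    rw [hρdef]
    unfold reflFun
    rw [dif_neg hx]
  set g : Fin 4 → Fin n := fun x => e (f (ρf x)) with hg
  have hmul : ∀ z : Fin n, (v * e) z = v (e z) := fun z => rfl
  have hgB : ∀ x : Fin 4, ((lo : ℕ) ≤ (x : ℕ) ∧ (x : ℕ) ≤ (hi : ℕ)) → g x ∈ B := by
    intro x hx
    exact w0J_mem_Blk hK ((hmem _).mpr (hρrange x hx))
  have hgnB : ∀ x : Fin 4, ¬((lo : ℕ) ≤ (x : ℕ) ∧ (x : ℕ) ≤ (hi : ℕ)) →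
      g x = f x ∧ f x ∉ B := by
    intro x hx
    have hfx : f x ∉ B := fun hc => hx ((hmem x).mp hc)
    rw [hg]
    simp only []
    rw [hρid x hx, w0J_of_not_mem hfx]
    exact ⟨rfl, hfx⟩
  -- order of out-of-block points vs block points
  have habove : ∀ x : Fin 4, f x ∉ B → (hi : ℕ) < (x : ℕ) → ((lo : ℕ) ≤ (hi : ℕ)) →
      ∀ q ∈ B, q < f x := by
    intro x hfx hx hlohi q hq
    have hfhi : f hi ∈ B := (hmem hi).mpr ⟨hlohi, le_refl _⟩
    by_contra hle
    push_neg at hle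
    exact hfx (Blk_interval K _ hfhi _ hq (f x) (le_of_lt (hf (Fin.lt_def.mpr hx))) hle)
  have hbelow : ∀ x : Fin 4, f x ∉ B → (x : ℕ) < (lo : ℕ) → ((lo : ℕ) ≤ (hi : ℕ)) →
      ∀ q ∈ B, f x < q := by
    intro x hfx hx hlohi q hq
    have hflo : f lo ∈ B := (hmem lo).mpr ⟨le_refl _, hlohi⟩
    by_contra hle
    push_neg at hle
    exact hfx (Blk_interval K _ hq _ hflo (f x) hle (le_of_lt (hf (Fin.lt_def.mpr hx))))
  have hgmono : StrictMono g := by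
    intro x y hxy
    have hxy' : (x : ℕ) < (y : ℕ) := Fin.lt_def.mp hxy
    by_cases hx : (lo : ℕ) ≤ (x : ℕ) ∧ (x : ℕ) ≤ (hi : ℕ) <;>
      by_cases hy : (lo : ℕ) ≤ (y : ℕ) ∧ (y : ℕ) ≤ (hi : ℕ)
    · -- both in range
      have hρ : ρf y < ρf x := by
        rw [Fin.lt_def, hρval x hx, hρval y hy]
        omega
      have hfρ : f (ρf y) < f (ρf x) := hf hρ
      exact w0J_anti hK ((hmem _).mpr (hρrange y hy)) ((hmem _).mpr (hρrange x hx)) hfρ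
    · -- x in, y out
      have hlohi : (lo : ℕ) ≤ (hi : ℕ) := le_trans hx.1 hx.2
      have hyhi : (hi : ℕ) < (y : ℕ) := by omega
      have hfy := (hgnB y hy).2
      have := habove y hfy hyhi hlohi (g x) (hgB x hx)
      rw [(hgnB y hy).1]
      exact this
    · -- x out, y in
      have hlohi : (lo : ℕ) ≤ (hi : ℕ) := le_trans hy.1 hy.2
      have hxlo : (x : ℕ) < (lo : ℕ) := by omega
      have hfx := (hgnB x hx).2
      have := hbelow x hfx hxlo hlohi (g y) (hgB y hy)
      rw [(hgnB x hx).1]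
      exact this
    · rw [(hgnB x hx).1, (hgnB y hy).1]
      exact hf hxy
  have hpat' : ∀ c d : Fin 4, (σ (ρf c) < σ (ρf d) ↔ v (g c) < v (g d)) := by
    intro c d
    rw [hpat (ρf c) (ρf d)]
    rw [hmul, hmul]
  have hcont : ∀ c d x : Fin 4, (lo : ℕ) ≤ (c : ℕ) → (c : ℕ) ≤ (hi : ℕ) →
      (lo : ℕ) ≤ (d : ℕ) → (d : ℕ) ≤ (hi : ℕ) →
      ¬((lo : ℕ) ≤ (x : ℕ) ∧ (x : ℕ) ≤ (hi : ℕ)) →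
      ¬(σ (ρf c) < σ (ρf x) ∧ σ (ρf x) < σ (ρf d)) := by
    rintro c d x hc1 hc2 hd1 hd2 hx ⟨h1, h2⟩
    rw [hpat' c x] at h1
    rw [hpat' x d] at h2
    have hvc : v (g c) ∈ ⇑v '' B := ⟨g c, hgB c ⟨hc1, hc2⟩, rfl⟩
    have hvd : v (g d) ∈ ⇑v '' B := ⟨g d, hgB d ⟨hd1, hd2⟩, rfl⟩
    have hvx : v (g x) ∈ ⇑v '' B :=
      hvB _ hvc _ hvd (v (g x)) (le_of_lt h1) (le_of_lt h2)
    obtain ⟨q, hq, hvq⟩ := hvx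
    have : q = g x := v.injective hvq
    rw [this] at hq
    exact (hgnB x hx).2 (by rw [← (hgnB x hx).1]; exact hq)
  rcases hkey lo hi hcont with hcase | hcase
  · exact hv.1 ⟨g, hgmono, fun a b => by rw [← hcase a, ← hcase b]; exact hpat' a b⟩
  · exact hv.2 ⟨g, hgmono, fun a b => by rw [← hcase a, ← hcase b]; exact hpat' a b⟩

lemma sep_mul_w0J (v : Equiv.Perm (Fin n)) (K : Finset ℕ) (hK : ValidK n K)
    (hvB : IsIntervalF (⇑v '' Blk n K)) (hv : Separable v) :
    Separable (v * w0J n K) := by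
  constructor
  · exact no_pattern_core v K hK hvB hv perm3142 key3142
  · exact no_pattern_core v K hK hvB hv perm2413 key2413

end Aux4

section Aux5

variable {n : ℕ}

lemma nested_basic {𝒩 : Finset (Finset ℕ)} (hN : IsNestedSetPath n 𝒩) (hn : 1 ≤ n)
    {K : Finset ℕ} (hK : K ∈ 𝒩) :
    ValidK n K ∧ (∀ x : ℕ, x ∈ K ↔ sInf (↑K : Set ℕ) ≤ x ∧ x ≤ sSup (↑K : Set ℕ)) := by
  obtain ⟨hne, hbd, hint⟩ := hN.1 K hK
  have hsne : (↑K : Set ℕ).Nonempty := by exact_mod_cast hne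
  have hbdd : BddAbove (↑K : Set ℕ) := K.finite_toSet.bddAbove
  have hainf : sInf (↑K : Set ℕ) ∈ K := Nat.sInf_mem hsne
  have hbsup : sSup (↑K : Set ℕ) ∈ K := Nat.sSup_mem hsne hbdd
  have h1 : 1 ≤ sInf (↑K : Set ℕ) := (hbd _ hainf).1
  have h3 : sSup (↑K : Set ℕ) ≤ n - 1 := (hbd _ hbsup).2
  have hle : ∀ x ∈ K, sInf (↑K : Set ℕ) ≤ x := fun x hx => Nat.sInf_le hx
  have hge : ∀ x ∈ K, x ≤ sSup (↑K : Set ℕ) := fun x hx => le_csSup hbdd hx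
  refine ⟨⟨h1, le_trans (hle _ hbsup) (le_refl _), by omega⟩, fun x => ⟨fun hx => ⟨hle x hx, hge x hx⟩, fun hx => ?_⟩⟩
  exact hint _ hainf _ hbsup x hx.1 hx.2

lemma not_adjacent {𝒩 : Finset (Finset ℕ)} (hN : IsNestedSetPath n 𝒩) (hn : 1 ≤ n)
    {K K' : Finset ℕ} (hK : K ∈ 𝒩) (hK' : K' ∈ 𝒩) (hd : K ∩ K' = ∅)
    (hadj : sInf (↑K' : Set ℕ) = sSup (↑K : Set ℕ) + 1) : False := by
  obtain ⟨hvK, hmemK⟩ := nested_basic hN hn hK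
  obtain ⟨hvK', hmemK'⟩ := nested_basic hN hn hK'
  have hKne : K ≠ K' := by
    intro h
    rw [h] at hd
    have : sInf (↑K' : Set ℕ) ∈ K' := (hmemK' _).mpr ⟨le_refl _, hvK'.2.1⟩
    have h2 : sInf (↑K' : Set ℕ) ∈ K' ∩ K' := Finset.mem_inter.mpr ⟨this, this⟩
    rw [hd] at h2
    exact Finset.notMem_empty _ h2
  set S : Finset (Finset ℕ) := {K, K'} with hS
  have hsub : S ⊆ 𝒩 := by
    intro x hx
    rw [hS, Finset.mem_insert, Finset.mem_singleton] at hx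
    rcases hx with rfl | rfl <;> assumption
  have hcard : 2 ≤ S.card := by
    rw [hS, Finset.card_insert_of_notMem (by simpa using hKne), Finset.card_singleton]
  have hpair : (↑S : Set (Finset ℕ)).Pairwise (fun I J => I ∩ J = ∅) := by
    intro x hx y hy hxy
    rw [hS] at hx hy
    simp only [Finset.coe_insert, Finset.coe_singleton, Set.mem_insert_iff,
      Set.mem_singleton_iff] at hx hy
    rcases hx with rfl | rfl <;> rcases hy with rfl | rfl
    · exact absurd rfl hxy
    · exact hd
    · rw [Finset.inter_comm]; exact hd
    · exact absurd rfl hxy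
  apply hN.2.2 S hsub hcard hpair
  have hU : (⋃ J ∈ (↑S : Set (Finset ℕ)), (↑J : Set ℕ)) = (↑K : Set ℕ) ∪ (↑K' : Set ℕ) := by
    rw [hS]
    simp
  rw [hU]
  intro i hi j hj m him hmj
  have hi' : (sInf (↑K : Set ℕ) ≤ i ∧ i ≤ sSup (↑K : Set ℕ)) ∨
      (sInf (↑K' : Set ℕ) ≤ i ∧ i ≤ sSup (↑K' : Set ℕ)) := by
    rcases hi with h | h
    · exact Or.inl ((hmemK i).mp h)
    · exact Or.inr ((hmemK' i).mp h)
  have hj' : (sInf (↑K : Set ℕ) ≤ j ∧ j ≤ sSup (↑K : Set ℕ)) ∨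
      (sInf (↑K' : Set ℕ) ≤ j ∧ j ≤ sSup (↑K' : Set ℕ)) := by
    rcases hj with h | h
    · exact Or.inl ((hmemK j).mp h)
    · exact Or.inr ((hmemK' j).mp h)
  have hmm : m ∈ K ∨ m ∈ K' := by
    rw [hmemK, hmemK']
    have e1 := hvK.2.1
    have e2 := hvK'.2.1
    omega
  rcases hmm with h | h
  · exact Or.inl h
  · exact Or.inr h

lemma blk_disjoint_of_disjoint {𝒩 : Finset (Finset ℕ)} (hN : IsNestedSetPath n 𝒩) (hn : 1 ≤ n)
    {K K' : Finset ℕ} (hK : K ∈ 𝒩) (hK' : K' ∈ 𝒩) (hd : K ∩ K' = ∅) :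
    Blk n K ∩ Blk n K' = ∅ := by
  obtain ⟨hvK, hmemK⟩ := nested_basic hN hn hK
  obtain ⟨hvK', hmemK'⟩ := nested_basic hN hn hK'
  rw [Set.eq_empty_iff_forall_notMem]
  rintro p ⟨hp1, hp2⟩
  rw [mem_Blk] at hp1 hp2
  have hnotmem : ∀ x : ℕ, ¬(x ∈ K ∧ x ∈ K') := by
    rintro x ⟨h1, h2⟩
    have : x ∈ K ∩ K' := Finset.mem_inter.mpr ⟨h1, h2⟩
    rw [hd] at this
    exact Finset.notMem_empty _ this
  have horder : sSup (↑K : Set ℕ) < sInf (↑K' : Set ℕ) ∨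
      sSup (↑K' : Set ℕ) < sInf (↑K : Set ℕ) := by
    by_contra hcc
    push_neg at hcc
    have e1 := hvK.2.1
    have e2 := hvK'.2.1
    refine hnotmem (max (sInf (↑K : Set ℕ)) (sInf (↑K' : Set ℕ)))
      ⟨(hmemK _).mpr ⟨?_, ?_⟩, (hmemK' _).mpr ⟨?_, ?_⟩⟩ <;> omega
  rcases horder with h | h
  · exact not_adjacent hN hn hK hK' hd (by
      have e1 := hvK.1
      have e2 := hvK'.1
      omega)
  · exact not_adjacent hN hn hK' hK (by rw [Finset.inter_comm]; exact hd) (by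
      have e1 := hvK.1
      have e2 := hvK'.1
      omega)

lemma Blk_mono {K K' : Finset ℕ} (hne : K'.Nonempty) (hsub : K' ⊆ K) :
    Blk n K' ⊆ Blk n K := by
  have hsne : (↑K' : Set ℕ).Nonempty := by exact_mod_cast hne
  have hbdd : BddAbove (↑K : Set ℕ) := K.finite_toSet.bddAbove
  have h1 : sInf (↑K : Set ℕ) ≤ sInf (↑K' : Set ℕ) := Nat.sInf_le (hsub (Nat.sInf_mem hsne))
  have h2 : sSup (↑K' : Set ℕ) ≤ sSup (↑K : Set ℕ) :=
    le_csSup hbdd (hsub (Nat.sSup_mem hsne (K'.finite_toSet.bddAbove)))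
  intro p hp
  rw [mem_Blk] at *
  omega

end Aux5

section Aux6

variable {n : ℕ}

lemma separable_one : Separable (1 : Equiv.Perm (Fin n)) := by
  constructor <;> rintro ⟨f, hf, hpat⟩
  · have h01 : f 0 < f 1 := hf (by decide)
    have := (hpat 0 1).mpr (by simpa using h01)
    exact absurd this (by decide)
  · have h12 : f 1 < f 2 := hf (by decide)
    have := (hpat 1 2).mpr (by simpa using h12)
    exact absurd this (by decide)

lemma aux_main (n : ℕ) (hn : 2 ≤ n) (𝒩 : Finset (Finset ℕ)) (hN : IsNestedSetPath n 𝒩) :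
    ∀ L : List (Finset ℕ), L.Nodup → (∀ K ∈ L, K ∈ 𝒩) →
      L.Pairwise (fun X Y => ¬ X ⊂ Y) →
      Separable ((L.map (w0J n)).prod) := by
  intro L
  induction L using List.reverseRecOn with
  | nil =>
    intro _ _ _
    rw [List.map_nil, List.prod_nil]
    exact separable_one
  | append_singleton L J ih =>
    intro hnd hmem hpw
    have hn1 : 1 ≤ n := by omega
    rw [List.pairwise_append] at hpw
    obtain ⟨hpwL, _, hcross⟩ := hpw
    obtain ⟨hndL, _, hdisj⟩ := List.nodup_append.mp hnd
    have hJmem : J ∈ 𝒩 := hmem J (by simp)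
    have hmemL : ∀ K ∈ L, K ∈ 𝒩 := fun K hK => hmem K (by simp [hK])
    have hneJ : ∀ K ∈ L, K ≠ J := by
      intro K hK heq
      exact hdisj K hK J (by simp) heq
    have hv : Separable ((L.map (w0J n)).prod) := ih hndL hmemL hpwL
    have hvalJ : ValidK n J := (nested_basic hN hn1 hJmem).1
    have hvalL : ∀ K ∈ L, ValidK n K := fun K hK => (nested_basic hN hn1 (hmemL K hK)).1
    have hcomb : L.Pairwise (fun X Y => X ≠ Y ∧ ¬ X ⊂ Y) := hndL.and hpwL
    have hord : L.Pairwise (fun K K' => Blk n K' ⊆ Blk n K ∨ Blk n K' ∩ Blk n K = ∅) := by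
      refine hcomb.imp_of_mem ?_
      rintro K K' hKmem hK'mem ⟨hne, hns⟩
      rcases hN.2.1 K (hmemL K hKmem) K' (hmemL K' hK'mem) with hc | hc | hc
      · exact absurd (hc.ssubset_of_ne hne) hns
      · exact Or.inl (Blk_mono (hN.1 K' (hmemL K' hK'mem)).1 hc)
      · refine Or.inr ?_
        rw [Set.inter_comm]
        exact blk_disjoint_of_disjoint hN hn1 (hmemL K hKmem) (hmemL K' hK'mem) hc
    have hcompat : ∀ K ∈ L, Blk n K ⊆ Blk n J ∨ Blk n J ⊆ Blk n K ∨
        Blk n J ∩ Blk n K = ∅ := by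
      intro K hK
      rcases hN.2.1 J hJmem K (hmemL K hK) with hc | hc | hc
      · exact Or.inr (Or.inl (Blk_mono (hN.1 J hJmem).1 hc))
      · have hKJ : K ⊂ J := hc.ssubset_of_ne (hneJ K hK)
        exact absurd hKJ (hcross K hK J (by simp))
      · exact Or.inr (Or.inr (blk_disjoint_of_disjoint hN hn1 hJmem (hmemL K hK) hc))
    have hint := (prod_image_interval L hvalL hord (Blk n J) (Blk_interval J) hcompat).1
    have hres := sep_mul_w0J _ J hvalJ hint hv
    have hrw : ((L ++ [J]).map (w0J n)).prod = (L.map (w0J n)).prod * w0J n J := by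
      simp
    rw [hrw]
    exact hres

end Aux6

/-- for a nested set `𝒩` on the path graph with vertex set `{1,…,n-1}`
and any monotonic ordering `L` of its members, the product `w₀(J₁)⋯w₀(J_r)` is a
separable permutation. -/
theorem stmt_14 (n : ℕ) (hn : 2 ≤ n) (𝒩 : Finset (Finset ℕ)) (hN : IsNestedSetPath n 𝒩)
    (L : List (Finset ℕ)) (hL : MonotonicOrdering 𝒩 L) :
    Separable ((L.map (w0J n)).prod) := by

  obtain ⟨hnd, hfin, hmono⟩ := hL
  apply aux_main n hn 𝒩 hN L hnd
  · intro K hK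
    rw [← hfin]
    exact List.mem_toFinset.mpr hK
  · rw [List.pairwise_iff_get]
    intro i j hij hsub
    have h1 := hmono i j hsub
    have h2 := Fin.lt_def.mp hij
    omega

end SepPaper
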